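/- Block setting as above, with f : E → ℝ convex differentiable and (m, L_m)-blockwise smooth, g_i μ-strongly convex with μ ≥ 0, F := f + g, θ := m/M. Let β_k ∈ ℝ, ρ_k ∈ ℝ, η_k ∈ ℝ, and fix x^k ∈ E, λ^k ∈ ℝ^p, r^k := A x^k − b. For each S ∈ 𝒮_m define x^{k+1}(S) by: x^{k+1}(S)_i = x^k_i for i ∉ S, and for i ∈ S there is a subgradient v_i of g_i at x^{k+1}(S)_i with ∇_i f(x^k) − A_iᵀ(λ^k − β_k r^k) + v_i + η_k(x^{k+1}(S)_i − x^k_i) = 0; set r^{k+1}(S) := A x^{k+1}(S) − b and λ^{k+1}(S) := λ^k − ρ_k r^{k+1}(S). Then for every x ∈ E with Ax = b: E_S[ Φ(x^{k+1}, x, λ^{k+1}) + (β_k − ρ_k)‖r^{k+1}‖² + (μ/2)‖x^{k+1} − x‖² ] ≤ (1 − θ)( Φ(x^k, x, λ^k) + β_k‖r^k‖² + (μ/2)‖x^k − x‖² ) − E_S[ Δ_{η_k I − β_k AᵀA}(x^{k+1}, x^k, x) − (L_m/2)‖x^{k+1} − x^k‖² ], where E_S is the average over all S ∈ 𝒮_m.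 -/

import Mathlib

open scoped RealInnerProductSpace

lemma grad_support {E : Type*} [NormedAddCommGroup E] [InnerProductSpace ℝ E] [CompleteSpace E]
    {f : E → ℝ} (hf : ConvexOn ℝ Set.univ f) {y G : E} (hg : HasGradientAt f G y) (z : E) :
    f y + ⟪G, z - y⟫ ≤ f z := by
  set φ : ℝ → ℝ := f ∘ (AffineMap.lineMap y z) with hφdef
  have hφc : ConvexOn ℝ Set.univ φ := by
    have := hf.comp_affineMap (AffineMap.lineMap y z : ℝ →ᵃ[ℝ] E)
    simpa using this
  have hline : HasDerivAt (fun t : ℝ => (AffineMap.lineMap y z : ℝ →ᵃ[ℝ] E) t) (z - y) 0 := by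
    have h : HasDerivAt (fun t : ℝ => t • (z - y) + y) ((1 : ℝ) • (z - y)) 0 :=
      ((hasDerivAt_id (0 : ℝ)).smul_const (z - y)).add_const y
    simpa [AffineMap.lineMap_apply, one_smul] using h
  have hF : HasFDerivAt f (InnerProductSpace.toDual ℝ E G) y := hg.hasFDerivAt
  have hd : HasDerivAt φ ⟪G, z - y⟫ 0 := by
    have h0 : (AffineMap.lineMap y z : ℝ →ᵃ[ℝ] E) (0 : ℝ) = y := AffineMap.lineMap_apply_zero _ _
    have := (h0 ▸ hF).comp_hasDerivAt (0 : ℝ) hline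
    simpa [hφdef] using this
  have hs := hφc.le_slope_of_hasDerivAt (Set.mem_univ (0:ℝ)) (Set.mem_univ (1:ℝ)) one_pos hd
  have h1 : φ 1 = f z := by simp [hφdef]
  have h0 : φ 0 = f y := by simp [hφdef]
  rw [slope_def_field] at hs
  simp [h1, h0] at hs
  linarith

lemma strong_subgrad {E : Type*} [NormedAddCommGroup E] [InnerProductSpace ℝ E]
    {g : E → ℝ} {μ : ℝ} (hμ : 0 ≤ μ)
    (hconv : ConvexOn ℝ Set.univ (fun z => g z - μ / 2 * ‖z‖ ^ 2))
    {y v : E} (hsub : ∀ z, g y + ⟪v, z - y⟫ ≤ g z) (z : E) :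
    g y + ⟪v, z - y⟫ + μ / 2 * ‖z - y‖ ^ 2 ≤ g z := by
  set K := ‖z - y‖ ^ 2 with hK
  have hK0 : 0 ≤ K := by positivity
  apply le_of_forall_pos_le_add
  intro ε hε
  set t : ℝ := min 1 (2 * ε / (μ * K + 1)) with ht
  have hden : 0 < μ * K + 1 := by nlinarith
  have ht0 : 0 < t := lt_min one_pos (by positivity)
  have ht1 : t ≤ 1 := min_le_left _ _
  have htε : μ * t / 2 * K ≤ ε := by
    have h2 : t ≤ 2 * ε / (μ * K + 1) := min_le_right _ _
    have h3 : t * (μ * K + 1) ≤ 2 * ε := by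
      rw [← le_div_iff₀ hden]; exact h2
    nlinarith [mul_nonneg (mul_nonneg hμ ht0.le) hK0]
  set yt : E := y + t • (z - y) with hyt
  have h1 : g y + t * ⟪v, z - y⟫ ≤ g yt := by
    have := hsub yt
    simpa [hyt, real_inner_smul_right] using this
  have hcomb : yt = (1 - t) • y + t • z := by
    rw [hyt]; module
  have h2 := hconv.2 (Set.mem_univ y) (Set.mem_univ z) (by linarith : (0:ℝ) ≤ 1 - t) ht0.le
    (by ring : (1 - t) + t = 1)
  simp only [← hcomb] at h2
  have h3 : ‖yt‖ ^ 2 = ‖y‖ ^ 2 + 2 * (t * ⟪y, z - y⟫) + t ^ 2 * K := by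
    rw [hyt, norm_add_sq_real, norm_smul, real_inner_smul_right]
    simp [hK, mul_pow, abs_of_nonneg ht0.le]
  have h4 : ‖z‖ ^ 2 = ‖y‖ ^ 2 + 2 * ⟪y, z - y⟫ + K := by
    have : y + (z - y) = z := by abel
    calc ‖z‖ ^ 2 = ‖y + (z - y)‖ ^ 2 := by rw [this]
    _ = ‖y‖ ^ 2 + 2 * ⟪y, z - y⟫ + K := by rw [norm_add_sq_real, hK]
  simp only [smul_eq_mul] at h2
  rw [h3, h4] at h2
  have h5 : t * (g y + ⟪v, z - y⟫ + μ / 2 * (1 - t) * K) ≤ t * g z := by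
    ring_nf at h1 h2 ⊢
    linarith
  have h6 : g y + ⟪v, z - y⟫ + μ / 2 * (1 - t) * K ≤ g z := le_of_mul_le_mul_left
    (by simpa [mul_comm] using h5) ht0
  nlinarith


lemma count_mem_powersetCard {M m : ℕ} (hm : 1 ≤ m) (i : Fin M) :
    ((Finset.powersetCard m (Finset.univ : Finset (Fin M))).filter (fun S => i ∈ S)).card
      = (M - 1).choose (m - 1) := by
  have hcard : (((Finset.univ : Finset (Fin M)).erase i).powersetCard (m-1)).card
      = (M - 1).choose (m - 1) := by
    rw [Finset.card_powersetCard, Finset.card_erase_of_mem (Finset.mem_univ i),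
      Finset.card_univ, Fintype.card_fin]
  rw [← hcard]
  apply Finset.card_bij' (fun S _ => S.erase i) (fun T _ => insert i T)
  · intro S hS
    simp only [Finset.mem_filter] at hS
    exact Finset.insert_erase hS.2
  · intro T hT
    simp only [Finset.mem_powersetCard] at hT
    exact Finset.erase_insert (fun h => (Finset.mem_erase.mp (hT.1 h)).1 rfl)
  · intro S hS
    simp only [Finset.mem_filter, Finset.mem_powersetCard] at hS
    simp only [Finset.mem_powersetCard]
    refine ⟨fun j hj => ?_, ?_⟩
    · simp only [Finset.mem_erase] at hj ⊢
      exact ⟨hj.1, Finset.mem_univ j⟩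
    · rw [Finset.card_erase_of_mem hS.2, hS.1.2]
  · intro T hT
    simp only [Finset.mem_powersetCard] at hT
    have hiT : i ∉ T := fun h => (Finset.mem_erase.mp (hT.1 h)).1 rfl
    simp only [Finset.mem_filter, Finset.mem_powersetCard]
    refine ⟨⟨fun j _ => Finset.mem_univ j, ?_⟩, Finset.mem_insert_self i T⟩
    rw [Finset.card_insert_of_notMem hiT, hT.2]
    omega

lemma ratio_eq {M m : ℕ} (hm : 1 ≤ m) (hmM : m ≤ M) :
    (M : ℝ) * ((M - 1).choose (m - 1) : ℕ) = (m : ℝ) * (M.choose m : ℕ) := by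
  obtain ⟨M', rfl⟩ : ∃ M', M = M' + 1 := ⟨M - 1, by omega⟩
  obtain ⟨m', rfl⟩ : ∃ m', m = m' + 1 := ⟨m - 1, by omega⟩
  have h := Nat.add_one_mul_choose_eq M' m'
  simp only [Nat.add_sub_cancel]
  have h2 : (M' + 1) * M'.choose m' = (m' + 1) * (M' + 1).choose (m' + 1) := by
    have := Nat.add_one_mul_choose_eq M' m'
    rw [this]; ring
  exact_mod_cast congrArg (fun k : ℕ => (k : ℝ)) h2

set_option maxHeartbeats 2000000

/-- The product space `∏ i, ℝ^{n i}` with the ℓ² product inner product. -/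
abbrev blockE (M : ℕ) (n : Fin M → ℕ) : Type :=
  PiLp 2 (fun i : Fin M => EuclideanSpace ℝ (Fin (n i)))

/-- Lemma 3.2 of the paper (one iteration analysis of Algorithm 2). -/
theorem stmt_7
    {M m p : ℕ} (hm : 1 ≤ m) (hmM : m ≤ M) {n : Fin M → ℕ}
    (A : ∀ i : Fin M, EuclideanSpace ℝ (Fin (n i)) →L[ℝ] EuclideanSpace ℝ (Fin p))
    (b : EuclideanSpace ℝ (Fin p))
    (Amap : blockE M n → EuclideanSpace ℝ (Fin p))
    (hAmap : ∀ z, Amap z = ∑ i, A i (z i))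
    (f : blockE M n → ℝ) (Gf : blockE M n → blockE M n)
    (hfconv : ConvexOn ℝ Set.univ f)
    (hfgrad : ∀ z, HasGradientAt f (Gf z) z)
    (Lm : ℝ)
    (hfsmooth : ∀ u w : blockE M n, ∀ S : Finset (Fin M), S.card ≤ m →
      (∀ i ∉ S, u i = w i) →
      f u ≤ f w + inner ℝ (Gf w) (u - w) + Lm / 2 * ‖u - w‖ ^ 2)
    (gi : ∀ i : Fin M, EuclideanSpace ℝ (Fin (n i)) → ℝ)
    (μ : ℝ) (hμ : 0 ≤ μ)
    (hgi : ∀ i, ConvexOn ℝ Set.univ (fun z => gi i z - μ / 2 * ‖z‖ ^ 2))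
    (F : blockE M n → ℝ) (hF : ∀ z, F z = f z + ∑ i, gi i (z i))
    (βk ρk ηk : ℝ)
    (xk : blockE M n) (lamk : EuclideanSpace ℝ (Fin p))
    (rk : EuclideanSpace ℝ (Fin p)) (hrk : rk = Amap xk - b)
    (xkp : Finset (Fin M) → blockE M n)
    (rkp lamkp : Finset (Fin M) → EuclideanSpace ℝ (Fin p))
    (hfix : ∀ S ∈ Finset.powersetCard m (Finset.univ : Finset (Fin M)),
      ∀ i ∉ S, xkp S i = xk i)
    (hopt : ∀ S ∈ Finset.powersetCard m (Finset.univ : Finset (Fin M)),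
      ∀ i ∈ S, ∃ v : EuclideanSpace ℝ (Fin (n i)),
        (∀ z, gi i (xkp S i) + inner ℝ v (z - xkp S i) ≤ gi i z) ∧
        Gf xk i - ContinuousLinearMap.adjoint (A i) (lamk - βk • rk)
          + v + ηk • (xkp S i - xk i) = 0)
    (hrkp : ∀ S ∈ Finset.powersetCard m (Finset.univ : Finset (Fin M)),
      rkp S = Amap (xkp S) - b)
    (hlamkp : ∀ S ∈ Finset.powersetCard m (Finset.univ : Finset (Fin M)),
      lamkp S = lamk - ρk • rkp S)
    (qA : blockE M n → ℝ)
    (hqA : ∀ u, qA u = ηk * ‖u‖ ^ 2 - βk * ‖Amap u‖ ^ 2)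
    (x : blockE M n) (hx : Amap x = b) :
    ((Finset.powersetCard m (Finset.univ : Finset (Fin M))).card : ℝ)⁻¹ *
      ∑ S ∈ Finset.powersetCard m (Finset.univ : Finset (Fin M)),
        ((F (xkp S) - F x - inner ℝ (lamkp S) (Amap (xkp S) - b))
          + (βk - ρk) * ‖rkp S‖ ^ 2 + μ / 2 * ‖xkp S - x‖ ^ 2)
    ≤ (1 - (m : ℝ) / M) *
        ((F xk - F x - inner ℝ lamk (Amap xk - b))
          + βk * ‖rk‖ ^ 2 + μ / 2 * ‖xk - x‖ ^ 2)
      - ((Finset.powersetCard m (Finset.univ : Finset (Fin M))).card : ℝ)⁻¹ *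
          ∑ S ∈ Finset.powersetCard m (Finset.univ : Finset (Fin M)),
            (1 / 2 * (qA (xkp S - x) - qA (xk - x) + qA (xkp S - xk))
              - Lm / 2 * ‖xkp S - xk‖ ^ 2) := by
  
  have hM : 1 ≤ M := le_trans hm hmM
  set P := Finset.powersetCard m (Finset.univ : Finset (Fin M)) with hPdef
  have hNnat : P.card = M.choose m := by
    rw [hPdef, Finset.card_powersetCard, Finset.card_univ, Fintype.card_fin]
  have hNpos : 0 < P.card := by rw [hNnat]; exact Nat.choose_pos hmM
  have hNR : (0:ℝ) < (P.card : ℝ) := by exact_mod_cast hNpos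
  have hMR : (0:ℝ) < (M : ℝ) := by exact_mod_cast hM
  set d : Fin M → ℝ := fun i => ⟪Gf xk i, xk i - x i⟫ with hd
  set e : Fin M → ℝ := fun i => gi i (xk i) - gi i (x i)
      - ⟪(lamk - βk • rk : EuclideanSpace ℝ (Fin p)), (A i) (xk i - x i)⟫
      + μ / 2 * ‖xk i - x i‖ ^ 2 with he
  have hAsub : ∀ u v' : blockE M n, Amap (u - v') = Amap u - Amap v' := by
    intro u v'
    simp only [hAmap, PiLp.sub_apply, map_sub, Finset.sum_sub_distrib]
  -- Per-subset key inequality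
  have key : ∀ S ∈ P,
      ((F (xkp S) - F x - inner ℝ (lamkp S) (Amap (xkp S) - b))
          + (βk - ρk) * ‖rkp S‖ ^ 2 + μ / 2 * ‖xkp S - x‖ ^ 2)
        + (1 / 2 * (qA (xkp S - x) - qA (xk - x) + qA (xkp S - xk))
            - Lm / 2 * ‖xkp S - xk‖ ^ 2)
      ≤ (f xk - f x + ∑ i, e i) - ∑ i ∈ S, (d i + e i) := by
    intro S hS
    have hS' : S ∈ Finset.powersetCard m (Finset.univ : Finset (Fin M)) := by rwa [hPdef] at hS
    have hScard : S.card = m := (Finset.mem_powersetCard.mp hS').2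
    have hfx : ∀ i ∉ S, xkp S i = xk i := hfix S hS'
    have hrS : rkp S = Amap (xkp S) - b := hrkp S hS'
    have hlS : lamkp S = lamk - ρk • rkp S := hlamkp S hS'
    have hfA : f (xkp S) ≤ f xk + ⟪Gf xk, xkp S - xk⟫ + Lm / 2 * ‖xkp S - xk‖ ^ 2 :=
      hfsmooth (xkp S) xk S (le_of_eq hScard) hfx
    set T : Fin M → ℝ := fun i =>
      -⟪Gf xk i, xkp S i - x i⟫
      + ⟪(lamk - βk • rk : EuclideanSpace ℝ (Fin p)), (A i) (xkp S i - x i)⟫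
      - ηk * ⟪xkp S i - xk i, xkp S i - x i⟫
      - μ / 2 * ‖xkp S i - x i‖ ^ 2 with hT
    have hgin : ∀ i ∈ S, gi i (xkp S i) ≤ gi i (x i) + T i := by
      intro i hi
      obtain ⟨v, hsub, heq⟩ := hopt S hS' i hi
      have h1 := strong_subgrad hμ (hgi i) hsub (x i)
      rw [norm_sub_rev] at h1
      have h0 : ⟪Gf xk i - (ContinuousLinearMap.adjoint (A i)) (lamk - βk • rk)
          + v + ηk • (xkp S i - xk i), x i - xkp S i⟫ = (0:ℝ) := by
        rw [heq]; simp
      simp only [hT, inner_add_left, inner_sub_left, inner_sub_right,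
        real_inner_smul_left, ContinuousLinearMap.adjoint_inner_left, map_sub] at h0 h1 ⊢
      linarith
    have hgout : ∀ i ∈ Sᶜ, gi i (xkp S i) = gi i (x i) + T i + (d i + e i) := by
      intro i hi
      have hxi : xkp S i = xk i := hfx i (Finset.mem_compl.mp hi)
      simp only [hT, hd, he, hxi, sub_self, inner_zero_left, mul_zero]
      ring
    have hge : ∑ i, gi i (xkp S i)
        ≤ ∑ i, gi i (x i) + ∑ i, T i + (∑ i, (d i + e i) - ∑ i ∈ S, (d i + e i)) := by
      have hsplit : ∑ i ∈ Sᶜ, (d i + e i) = ∑ i, (d i + e i) - ∑ i ∈ S, (d i + e i) := by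
        rw [← Finset.sum_add_sum_compl S (fun i => d i + e i)]; ring
      calc ∑ i, gi i (xkp S i)
          = ∑ i ∈ S, gi i (xkp S i) + ∑ i ∈ Sᶜ, gi i (xkp S i) :=
            (Finset.sum_add_sum_compl S _).symm
        _ ≤ ∑ i ∈ S, (gi i (x i) + T i) + ∑ i ∈ Sᶜ, (gi i (x i) + T i + (d i + e i)) :=
            add_le_add (Finset.sum_le_sum hgin) (le_of_eq (Finset.sum_congr rfl hgout))
        _ = ∑ i ∈ S, (gi i (x i) + T i) + (∑ i ∈ Sᶜ, (gi i (x i) + T i) + ∑ i ∈ Sᶜ, (d i + e i)) := by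
            congr 1
            exact Finset.sum_add_distrib
        _ = ∑ i, (gi i (x i) + T i) + ∑ i ∈ Sᶜ, (d i + e i) := by
            rw [← add_assoc, Finset.sum_add_sum_compl]
        _ = ∑ i, gi i (x i) + ∑ i, T i + (∑ i, (d i + e i) - ∑ i ∈ S, (d i + e i)) := by
            rw [Finset.sum_add_distrib, hsplit]
    have c2 : ∑ i, A i (xkp S i - x i) = rkp S := by
      simp only [map_sub, Finset.sum_sub_distrib, ← hAmap]
      rw [hrS, hx]
    have c1 : ∑ i, ⟪Gf xk i, xkp S i - x i⟫ = ⟪Gf xk, xkp S - x⟫ := by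
      conv_rhs => rw [PiLp.inner_apply]
      exact Finset.sum_congr rfl fun i _ => by rw [PiLp.sub_apply]
    have c3 : ∑ i, ⟪xkp S i - xk i, xkp S i - x i⟫ = ⟪xkp S - xk, xkp S - x⟫ := by
      conv_rhs => rw [PiLp.inner_apply]
      exact Finset.sum_congr rfl fun i _ => by rw [PiLp.sub_apply, PiLp.sub_apply]
    have c4 : ∑ i, ‖xkp S i - x i‖ ^ 2 = ‖xkp S - x‖ ^ 2 := by
      conv_rhs => rw [PiLp.norm_sq_eq_of_L2]
      exact Finset.sum_congr rfl fun i _ => by rw [PiLp.sub_apply]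
    have hTsum : ∑ i, T i = -⟪Gf xk, xkp S - x⟫
        + ⟪(lamk - βk • rk : EuclideanSpace ℝ (Fin p)), rkp S⟫
        - ηk * ⟪xkp S - xk, xkp S - x⟫ - μ / 2 * ‖xkp S - x‖ ^ 2 := by
      simp only [hT]
      rw [Finset.sum_sub_distrib, Finset.sum_sub_distrib, Finset.sum_add_distrib,
        Finset.sum_neg_distrib, ← Finset.mul_sum, ← Finset.mul_sum, ← inner_sum, c2, c1, c3, c4]
    have hlamS : ⟪lamkp S, Amap (xkp S) - b⟫ = ⟪lamk, rkp S⟫ - ρk * ‖rkp S‖ ^ 2 := by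
      rw [hlS, ← hrS, inner_sub_left, real_inner_smul_left, real_inner_self_eq_norm_sq]
    have hwS : ⟪(lamk - βk • rk : EuclideanSpace ℝ (Fin p)), rkp S⟫
        = ⟪lamk, rkp S⟫ - βk * ⟪rk, rkp S⟫ := by
      rw [inner_sub_left, real_inner_smul_left]
    have hGid : ⟪Gf xk, xkp S - xk⟫ - ⟪Gf xk, xkp S - x⟫ = - ∑ i, d i := by
      rw [← inner_sub_right]
      have hxx : (xkp S - xk) - (xkp S - x) = x - xk := by abel
      rw [hxx, ← Finset.sum_neg_distrib, PiLp.inner_apply]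
      apply Finset.sum_congr rfl
      intro i _
      simp only [hd, PiLp.sub_apply, inner_sub_right]
      ring
    have hA1 : Amap (xkp S - x) = rkp S := by rw [hAsub, hrS, hx]
    have hA2 : Amap (xk - x) = rk := by rw [hAsub, hrk, hx]
    have hA3 : Amap (xkp S - xk) = rkp S - rk := by rw [hAsub, hrS, hrk]; abel
    have hq : 1 / 2 * (qA (xkp S - x) - qA (xk - x) + qA (xkp S - xk))
        = ηk * ⟪xkp S - xk, xkp S - x⟫ - βk * ‖rkp S‖ ^ 2 + βk * ⟪rk, rkp S⟫ := by
      rw [hqA, hqA, hqA, hA1, hA2, hA3]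
      have hxs : xkp S - x = (xkp S - xk) + (xk - x) := by abel
      have e1 : ‖xkp S - x‖ ^ 2
          = ‖xkp S - xk‖ ^ 2 + 2 * ⟪xkp S - xk, xk - x⟫ + ‖xk - x‖ ^ 2 := by
        rw [hxs, norm_add_sq_real]
      have e2 : ⟪xkp S - xk, xkp S - x⟫ = ‖xkp S - xk‖ ^ 2 + ⟪xkp S - xk, xk - x⟫ := by
        rw [hxs, inner_add_right, real_inner_self_eq_norm_sq]
      have e3 : ‖rkp S - rk‖ ^ 2 = ‖rkp S‖ ^ 2 - 2 * ⟪rk, rkp S⟫ + ‖rk‖ ^ 2 := by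
        have h31 := norm_sub_sq_real (rkp S) rk
        have h32 := real_inner_comm (rkp S) rk
        linarith
      linear_combination (ηk / 2) * e1 - ηk * e2 - (βk / 2) * e3
    have hFX := hF (xkp S)
    have hFx := hF x
    have hde : ∑ i, (d i + e i) = ∑ i, d i + ∑ i, e i := Finset.sum_add_distrib
    linarith [hfA, hge, hTsum, hlamS, hwS, hGid, hq, hFX, hFx, hde]
  -- Averaging over all subsets
  have h1 : ∑ S ∈ P, (((F (xkp S) - F x - inner ℝ (lamkp S) (Amap (xkp S) - b))
          + (βk - ρk) * ‖rkp S‖ ^ 2 + μ / 2 * ‖xkp S - x‖ ^ 2)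
        + (1 / 2 * (qA (xkp S - x) - qA (xk - x) + qA (xkp S - xk))
            - Lm / 2 * ‖xkp S - xk‖ ^ 2))
      ≤ ∑ S ∈ P, ((f xk - f x + ∑ i, e i) - ∑ i ∈ S, (d i + e i)) :=
    Finset.sum_le_sum key
  have hcount : ∑ S ∈ P, ∑ i ∈ S, (d i + e i)
      = (((M - 1).choose (m - 1) : ℕ) : ℝ) * ∑ i, (d i + e i) := by
    have step1 : ∀ S ∈ P, ∑ i ∈ S, (d i + e i)
        = ∑ i : Fin M, if i ∈ S then (d i + e i) else 0 := by
      intro S hS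
      rw [Finset.sum_ite_mem, Finset.univ_inter]
    rw [Finset.sum_congr rfl step1, Finset.sum_comm]
    have step2 : ∀ i : Fin M, (∑ S ∈ P, if i ∈ S then (d i + e i) else 0)
        = (((M - 1).choose (m - 1) : ℕ) : ℝ) * (d i + e i) := by
      intro i
      rw [← Finset.sum_filter, Finset.sum_const, hPdef, count_mem_powersetCard hm i,
        nsmul_eq_mul]
    rw [Finset.sum_congr rfl (fun i _ => step2 i), ← Finset.mul_sum]
  have hratio : ((P.card : ℝ))⁻¹ * (((M - 1).choose (m - 1) : ℕ) : ℝ) = (m : ℝ) / M := by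
    have hnk := ratio_eq hm hmM
    rw [hNnat] at hNR ⊢
    field_simp
    linear_combination hnk
  have hD : f xk - f x ≤ ∑ i, d i := by
    have hgs := grad_support hfconv (hfgrad xk) x
    have hip : ⟪Gf xk, x - xk⟫ = - ∑ i, d i := by
      rw [← Finset.sum_neg_distrib]
      conv_lhs => rw [PiLp.inner_apply]
      apply Finset.sum_congr rfl
      intro i _
      simp only [hd, PiLp.sub_apply, inner_sub_right]
      ring
    linarith
  have hCE : (f xk - f x) + ∑ i, e i
      = F xk - F x - inner ℝ lamk (Amap xk - b) + βk * ‖rk‖ ^ 2 + μ / 2 * ‖xk - x‖ ^ 2 := by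
    have c2' : ∑ i, A i (xk i - x i) = rk := by
      simp only [map_sub, Finset.sum_sub_distrib, ← hAmap]
      rw [hrk, hx]
    have hsumE : ∑ i, e i = (∑ i, gi i (xk i) - ∑ i, gi i (x i))
        - ⟪(lamk - βk • rk : EuclideanSpace ℝ (Fin p)), rk⟫ + μ / 2 * ‖xk - x‖ ^ 2 := by
      simp only [he]
      have c4' : ∑ i, ‖xk i - x i‖ ^ 2 = ‖xk - x‖ ^ 2 := by
        conv_rhs => rw [PiLp.norm_sq_eq_of_L2]
        exact Finset.sum_congr rfl fun i _ => by rw [PiLp.sub_apply]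
      rw [Finset.sum_add_distrib, Finset.sum_sub_distrib, Finset.sum_sub_distrib,
        ← inner_sum, c2', ← Finset.mul_sum, c4']
    have hwrk : ⟪(lamk - βk • rk : EuclideanSpace ℝ (Fin p)), rk⟫
        = ⟪lamk, rk⟫ - βk * ‖rk‖ ^ 2 := by
      rw [inner_sub_left, real_inner_smul_left, real_inner_self_eq_norm_sq]
    have hlrk : (inner ℝ lamk (Amap xk - b) : ℝ) = ⟪lamk, rk⟫ := by rw [← hrk]
    rw [hF xk, hF x]
    linarith [hsumE, hwrk, hlrk]
  have hfinal : ((P.card : ℝ))⁻¹ * ∑ S ∈ P, (((F (xkp S) - F x - inner ℝ (lamkp S) (Amap (xkp S) - b))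
          + (βk - ρk) * ‖rkp S‖ ^ 2 + μ / 2 * ‖xkp S - x‖ ^ 2)
        + (1 / 2 * (qA (xkp S - x) - qA (xk - x) + qA (xkp S - xk))
            - Lm / 2 * ‖xkp S - xk‖ ^ 2))
      ≤ (1 - (m : ℝ) / M) * ((F xk - F x - inner ℝ lamk (Amap xk - b))
          + βk * ‖rk‖ ^ 2 + μ / 2 * ‖xk - x‖ ^ 2) := by
    have h2 : ∑ S ∈ P, ((f xk - f x + ∑ i, e i) - ∑ i ∈ S, (d i + e i))
        = (P.card : ℝ) * (f xk - f x + ∑ i, e i)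
          - (((M - 1).choose (m - 1) : ℕ) : ℝ) * ∑ i, (d i + e i) := by
      rw [Finset.sum_sub_distrib, Finset.sum_const, nsmul_eq_mul, hcount]
    have h3 : ((P.card : ℝ))⁻¹ * ∑ S ∈ P, (((F (xkp S) - F x - inner ℝ (lamkp S) (Amap (xkp S) - b))
          + (βk - ρk) * ‖rkp S‖ ^ 2 + μ / 2 * ‖xkp S - x‖ ^ 2)
        + (1 / 2 * (qA (xkp S - x) - qA (xk - x) + qA (xkp S - xk))
            - Lm / 2 * ‖xkp S - xk‖ ^ 2))
        ≤ ((P.card : ℝ))⁻¹ * ((P.card : ℝ) * (f xk - f x + ∑ i, e i)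
          - (((M - 1).choose (m - 1) : ℕ) : ℝ) * ∑ i, (d i + e i)) := by
      rw [← h2]
      exact mul_le_mul_of_nonneg_left h1 (inv_nonneg.mpr hNR.le)
    have h4 : ((P.card : ℝ))⁻¹ * ((P.card : ℝ) * (f xk - f x + ∑ i, e i)
          - (((M - 1).choose (m - 1) : ℕ) : ℝ) * ∑ i, (d i + e i))
        = (f xk - f x + ∑ i, e i)
          - ((m : ℝ) / M) * (∑ i, d i + ∑ i, e i) := by
      rw [mul_sub, ← mul_assoc, inv_mul_cancel₀ hNR.ne', one_mul, ← mul_assoc, hratio,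
        show (∑ i, (d i + e i)) = ∑ i, d i + ∑ i, e i from Finset.sum_add_distrib]
    have hθ0 : (0:ℝ) ≤ (m : ℝ) / M := by positivity
    have h5 : ((m : ℝ) / M) * (f xk - f x) ≤ ((m : ℝ) / M) * ∑ i, d i :=
      mul_le_mul_of_nonneg_left hD hθ0
    calc _ ≤ ((P.card : ℝ))⁻¹ * ((P.card : ℝ) * (f xk - f x + ∑ i, e i)
          - (((M - 1).choose (m - 1) : ℕ) : ℝ) * ∑ i, (d i + e i)) := h3
      _ = (f xk - f x + ∑ i, e i) - ((m : ℝ) / M) * (∑ i, d i + ∑ i, e i) := h4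
      _ ≤ (1 - (m : ℝ) / M) * ((f xk - f x) + ∑ i, e i) := by nlinarith [h5]
      _ = (1 - (m : ℝ) / M) * ((F xk - F x - inner ℝ lamk (Amap xk - b))
          + βk * ‖rk‖ ^ 2 + μ / 2 * ‖xk - x‖ ^ 2) := by rw [hCE]
  have hsplit2 : ∑ S ∈ P, (((F (xkp S) - F x - inner ℝ (lamkp S) (Amap (xkp S) - b))
          + (βk - ρk) * ‖rkp S‖ ^ 2 + μ / 2 * ‖xkp S - x‖ ^ 2)
        + (1 / 2 * (qA (xkp S - x) - qA (xk - x) + qA (xkp S - xk))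
            - Lm / 2 * ‖xkp S - xk‖ ^ 2))
      = ∑ S ∈ P, ((F (xkp S) - F x - inner ℝ (lamkp S) (Amap (xkp S) - b))
          + (βk - ρk) * ‖rkp S‖ ^ 2 + μ / 2 * ‖xkp S - x‖ ^ 2)
        + ∑ S ∈ P, (1 / 2 * (qA (xkp S - x) - qA (xk - x) + qA (xkp S - xk))
            - Lm / 2 * ‖xkp S - xk‖ ^ 2) := Finset.sum_add_distrib
  rw [hsplit2, mul_add] at hfinal
  linarith [hfinal]
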